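/- Let d ∈ ℕ, let D ⊆ ℝ^d be a nonempty open convex set, and let f : D → ℝ. If f is t-convex for some t ∈ (0,1) and f is bounded from above on some nonempty open subset of D, then f is convex and continuous on D. -/

import Mathlib

/-- A subset of `[0,1]` containing `0` and `1` and stable under `(a,b) ↦ t*a+(1-t)*b`
for some fixed `t ∈ (0,1)` is dense in `[0,1]`. -/
lemma stmt_1_aux_dense (t : ℝ) (ht0 : 0 < t) (ht1 : t < 1) (T : Set ℝ)
    (h0 : (0:ℝ) ∈ T) (h1 : (1:ℝ) ∈ T)
    (hstab : ∀ a ∈ T, ∀ b ∈ T, t*a + (1-t)*b ∈ T) :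
    Set.Icc (0:ℝ) 1 ⊆ closure T := by
  have hCcl : IsClosed (closure T) := isClosed_closure
  have hCstab : ∀ a ∈ closure T, ∀ b ∈ closure T, t*a + (1-t)*b ∈ closure T := by
    intro a ha b hb
    rw [mem_closure_iff_seq_limit] at ha hb ⊢
    obtain ⟨xa, hxa, hla⟩ := ha
    obtain ⟨xb, hxb, hlb⟩ := hb
    exact ⟨fun n => t * xa n + (1-t) * xb n, fun n => hstab _ (hxa n) _ (hxb n),
      ((hla.const_mul t).add (hlb.const_mul (1-t)))⟩
  intro s hs
  by_contra hsC
  have h0C : (0:ℝ) ∈ closure T := subset_closure h0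
  have h1C : (1:ℝ) ∈ closure T := subset_closure h1
  have hs0 : 0 < s := lt_of_le_of_ne hs.1 (fun h => hsC (h ▸ h0C))
  have hs1 : s < 1 := lt_of_le_of_ne hs.2 (fun h => hsC (by rw [h]; exact h1C))
  set A := closure T ∩ Set.Iic s with hA
  set B := closure T ∩ Set.Ici s with hB
  have hAne : A.Nonempty := ⟨0, h0C, hs.1⟩
  have hAbdd : BddAbove A := ⟨s, fun x hx => hx.2⟩
  have hAcl : IsClosed A := hCcl.inter isClosed_Iic
  have haA : sSup A ∈ A := hAcl.csSup_mem hAne hAbdd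
  have hBne : B.Nonempty := ⟨1, h1C, hs.2⟩
  have hBbdd : BddBelow B := ⟨s, fun x hx => hx.2⟩
  have hBcl : IsClosed B := hCcl.inter isClosed_Ici
  have hbB : sInf B ∈ B := hBcl.csInf_mem hBne hBbdd
  set a := sSup A with ha_def
  set b := sInf B with hb_def
  have ha_lt : a < s := lt_of_le_of_ne haA.2 (fun h => hsC (by rw [← h]; exact haA.1))
  have hsb : s ≠ b := fun h => hsC (by rw [h]; exact hbB.1)
  have hb_gt : s < b := lt_of_le_of_ne hbB.2 hsb
  set m := t * a + (1-t) * b with hm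
  have hmC : m ∈ closure T := hCstab a haA.1 b hbB.1
  have ham : a < m := by nlinarith [mul_pos (by linarith : (0:ℝ) < 1 - t) (by linarith : (0:ℝ) < b - a)]
  have hmb : m < b := by nlinarith [mul_pos ht0 (by linarith : (0:ℝ) < b - a)]
  rcases le_or_gt m s with h | h
  · have : m ≤ a := le_csSup hAbdd ⟨hmC, h⟩
    linarith
  · have : b ≤ m := csInf_le hBbdd ⟨hmC, h.le⟩
    linarith

set_option maxHeartbeats 1000000 in
/-- If `f : D → ℝ` on a nonempty open convex `D ⊆ ℝ^d` is `t`-convex for some `t ∈ (0,1)`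
and `f` is bounded above on some nonempty open subset of `D`, then `f` is convex and
continuous on `D`. -/
theorem stmt_1 (d : ℕ) (D : Set (EuclideanSpace ℝ (Fin d))) (hne : D.Nonempty)
    (hopen : IsOpen D) (hD : Convex ℝ D) (f : EuclideanSpace ℝ (Fin d) → ℝ) (t : ℝ)
    (ht : t ∈ Set.Ioo (0 : ℝ) 1)
    (htconv : ∀ x ∈ D, ∀ y ∈ D, f (t • x + (1 - t) • y) ≤ t * f x + (1 - t) * f y)
    (hbdd : ∃ U : Set (EuclideanSpace ℝ (Fin d)), U ⊆ D ∧ IsOpen U ∧ U.Nonempty ∧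
      ∃ M : ℝ, ∀ x ∈ U, f x ≤ M) :
    ConvexOn ℝ D f ∧ ContinuousOn f D := by
  obtain ⟨ht0, ht1⟩ := ht
  -- the set of good coefficients
  set T : Set ℝ := {s : ℝ | s ∈ Set.Icc (0:ℝ) 1 ∧
    ∀ x ∈ D, ∀ y ∈ D, f (s • x + (1-s) • y) ≤ s * f x + (1-s) * f y} with hT_def
  have h0T : (0:ℝ) ∈ T := by
    refine ⟨⟨le_refl 0, zero_le_one⟩, fun x hx y hy => ?_⟩
    simp
  have h1T : (1:ℝ) ∈ T := by
    refine ⟨⟨zero_le_one, le_refl 1⟩, fun x hx y hy => ?_⟩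
    simp
  have hstab : ∀ a ∈ T, ∀ b ∈ T, t*a + (1-t)*b ∈ T := by
    rintro a ⟨⟨ha0, ha1⟩, hPa⟩ b ⟨⟨hb0, hb1⟩, hPb⟩
    refine ⟨⟨by nlinarith, by nlinarith⟩, ?_⟩
    intro x hx y hy
    have hxa : a • x + (1-a) • y ∈ D := hD hx hy ha0 (by linarith) (by ring)
    have hxb : b • x + (1-b) • y ∈ D := hD hx hy hb0 (by linarith) (by ring)
    have key := htconv _ hxa _ hxb
    have h1 := hPa x hx y hy
    have h2 := hPb x hx y hy
    have heq : t • (a • x + (1-a) • y) + (1-t) • (b • x + (1-b) • y)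
        = (t*a + (1-t)*b) • x + (1 - (t*a+(1-t)*b)) • y := by module
    rw [heq] at key
    nlinarith [mul_le_mul_of_nonneg_left h1 ht0.le,
      mul_le_mul_of_nonneg_left h2 (by linarith : (0:ℝ) ≤ 1 - t)]
  have hdense : Set.Icc (0:ℝ) 1 ⊆ closure T := stmt_1_aux_dense t ht0 ht1 T h0T h1T hstab
  -- picking small elements of T
  have hpick : ∀ σ : ℝ, 0 < σ → ∃ s ∈ T, 0 < s ∧ s < σ := by
    intro σ hσ
    set c := (min σ 1) / 2 with hc
    have hc0 : 0 < c := by positivity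
    have hc1 : c ≤ 1/2 := by
      have := min_le_right σ 1
      rw [hc]; linarith
    have hcmem : c ∈ closure T := hdense ⟨hc0.le, by linarith⟩
    rw [Metric.mem_closure_iff] at hcmem
    obtain ⟨s, hsT, hds⟩ := hcmem (c/2) (by positivity)
    rw [Real.dist_eq, abs_sub_lt_iff] at hds
    refine ⟨s, hsT, by linarith, ?_⟩
    have hcσ : c ≤ σ/2 := by
      have := min_le_left σ 1
      rw [hc]; linarith
    linarith
  obtain ⟨U, hUD, hUopen, ⟨u, hu⟩, M, hM⟩ := hbdd
  obtain ⟨r, hr, hru⟩ := Metric.isOpen_iff.1 hUopen u hu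
  -- local upper bound at every point
  have hloc : ∀ z ∈ D, ∃ ρ > 0, ∃ M', Metric.ball z ρ ⊆ D ∧
      ∀ v ∈ Metric.ball z ρ, f v ≤ M' := by
    intro z hz
    obtain ⟨ρ₀, hρ₀, hball⟩ := Metric.isOpen_iff.1 hopen z hz
    set L := 2*‖z-u‖+2 with hL_def
    have hL : 0 < L := by positivity
    obtain ⟨s, hsT, hs0, hsσ⟩ := hpick (min (1/2) (ρ₀ / L)) (by positivity)
    have hs12 : s < 1/2 := lt_of_lt_of_le hsσ (min_le_left _ _)
    have hsρ : s * L < ρ₀ := (lt_div_iff₀ hL).1 (lt_of_lt_of_le hsσ (min_le_right _ _))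
    have h1s : (0:ℝ) < 1 - s := by linarith
    set w := z + (s/(1-s)) • (z - u) with hw_def
    have hwz : ‖w - z‖ < ρ₀ := by
      have hwz_eq : w - z = (s/(1-s)) • (z - u) := by rw [hw_def]; abel
      rw [hwz_eq, norm_smul, Real.norm_eq_abs, abs_of_pos (by positivity)]
      have h2s : s/(1-s) ≤ 2*s := by
        rw [div_le_iff₀ h1s]; nlinarith
      have : s/(1-s) * ‖z-u‖ ≤ (2*s) * ‖z-u‖ :=
        mul_le_mul_of_nonneg_right h2s (norm_nonneg _)
      nlinarith [norm_nonneg (z - u)]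
    have hwD : w ∈ D := hball (by rw [Metric.mem_ball, dist_eq_norm]; exact hwz)
    refine ⟨s * r, by positivity, max M (f w), ?_, ?_⟩ <;> intro v hv
    all_goals {
      have hvz : ‖v - z‖ < s * r := by rw [← dist_eq_norm]; exact hv
      set u' := u + s⁻¹ • (v - z) with hu'_def
      have hu'ball : u' ∈ Metric.ball u r := by
        rw [Metric.mem_ball, dist_eq_norm]
        have : u' - u = s⁻¹ • (v - z) := by rw [hu'_def]; abel
        rw [this, norm_smul, Real.norm_eq_abs, abs_of_pos (by positivity)]
        rw [inv_mul_lt_iff₀ hs0]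
        linarith
      have hu'D : u' ∈ D := hUD (hru hu'ball)
      have hid : s • u' + (1-s) • w = v := by
        rw [hu'_def, hw_def]
        match_scalars <;> (field_simp; try ring)
      first
      | exact hid ▸ hD hu'D hwD hs0.le h1s.le (by ring)
      | { have hle := hsT.2 u' hu'D w hwD
          rw [hid] at hle
          have hfu' : f u' ≤ M := hM u' (hru hu'ball)
          have h1 : s * f u' ≤ s * max M (f w) :=
            mul_le_mul_of_nonneg_left (le_trans hfu' (le_max_left _ _)) hs0.le
          have h2 : (1-s) * f w ≤ (1-s) * max M (f w) :=
            mul_le_mul_of_nonneg_left (le_max_right _ _) h1s.le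
          linarith }
    }
  -- continuity
  have hcont : ContinuousOn f D := by
    intro z hz
    apply ContinuousAt.continuousWithinAt
    rw [Metric.continuousAt_iff]
    intro ε hε
    obtain ⟨ρ, hρ, M', hballD, hbd⟩ := hloc z hz
    have hfz : f z ≤ M' := hbd z (Metric.mem_ball_self hρ)
    set C := M' - f z with hC_def
    have hC0 : 0 ≤ C := by linarith
    obtain ⟨s, hsT, hs0, hsσ⟩ := hpick (min (1/2) (ε / (2*C+1))) (by positivity)
    have hs12 : s < 1/2 := lt_of_lt_of_le hsσ (min_le_left _ _)
    have hsε : s * (2*C+1) < ε :=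
      (lt_div_iff₀ (by positivity)).1 (lt_of_lt_of_le hsσ (min_le_right _ _))
    have h1s : (0:ℝ) < 1 - s := by linarith
    refine ⟨s * ρ, by positivity, ?_⟩
    intro v hv
    have hvz : ‖v - z‖ < s * ρ := by rw [← dist_eq_norm]; exact hv
    have hvD : v ∈ D := hballD (by
      rw [Metric.mem_ball, dist_eq_norm]
      nlinarith)
    rw [Real.dist_eq, abs_sub_lt_iff]
    -- upper bound point
    set p := z + s⁻¹ • (v - z) with hp_def
    have hpball : p ∈ Metric.ball z ρ := by
      rw [Metric.mem_ball, dist_eq_norm]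
      have : p - z = s⁻¹ • (v - z) := by rw [hp_def]; abel
      rw [this, norm_smul, Real.norm_eq_abs, abs_of_pos (by positivity)]
      rw [inv_mul_lt_iff₀ hs0]
      linarith
    have hid1 : s • p + (1-s) • z = v := by
      rw [hp_def]; match_scalars <;> (field_simp; try ring)
    have hup := hsT.2 p (hballD hpball) z hz
    rw [hid1] at hup
    have hfp : f p ≤ M' := hbd p hpball
    -- lower bound point
    set q := z + ((1-s)/s) • (z - v) with hq_def
    have hqball : q ∈ Metric.ball z ρ := by
      rw [Metric.mem_ball, dist_eq_norm]
      have hqz : q - z = ((1-s)/s) • (z - v) := by rw [hq_def]; abel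
      rw [hqz, norm_smul, Real.norm_eq_abs, abs_of_pos (by positivity),
        norm_sub_rev]
      have h2 : (1-s)/s * ‖v - z‖ < (1-s)/s * (s * ρ) :=
        mul_lt_mul_of_pos_left hvz (by positivity)
      have h3 : (1-s)/s * (s * ρ) = (1-s) * ρ := by field_simp
      nlinarith
    have hid2 : s • q + (1-s) • v = z := by
      rw [hq_def]; match_scalars <;> (field_simp; try ring)
    have hlow := hsT.2 q (hballD hqball) v hvD
    rw [hid2] at hlow
    have hfq : f q ≤ M' := hbd q hqball
    constructor
    · -- f v - f z < ε
      nlinarith [mul_le_mul_of_nonneg_left hfp hs0.le]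
    · -- f z - f v < ε
      nlinarith [mul_le_mul_of_nonneg_left hfq hs0.le]
  -- convexity via density
  have hP : ∀ s ∈ Set.Icc (0:ℝ) 1, ∀ x ∈ D, ∀ y ∈ D,
      f (s • x + (1-s) • y) ≤ s * f x + (1-s) * f y := by
    intro s hs x hx y hy
    set g : ℝ → ℝ := fun a => f (a • x + (1-a) • y) - (a * f x + (1-a) * f y) with hg_def
    have hmaps : ∀ a ∈ Set.Icc (0:ℝ) 1, a • x + (1-a) • y ∈ D := fun a ha =>
      hD hx hy ha.1 (by linarith [ha.2]) (by ring)
    have hgc : ContinuousOn g (Set.Icc 0 1) := by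
      apply ContinuousOn.sub
      · exact hcont.comp
          (Continuous.continuousOn (by fun_prop : Continuous fun a : ℝ => a • x + (1-a) • y))
          hmaps
      · fun_prop
    set S : Set ℝ := Set.Icc (0:ℝ) 1 ∩ g ⁻¹' Set.Iic 0 with hS_def
    have hSclosed : IsClosed S :=
      hgc.preimage_isClosed_of_isClosed isClosed_Icc isClosed_Iic
    have hTS : T ⊆ S := by
      rintro a ⟨ha1, ha2⟩
      refine ⟨ha1, ?_⟩
      simp only [Set.mem_preimage, Set.mem_Iic, hg_def]
      linarith [ha2 x hx y hy]
    have hsS : s ∈ S := hSclosed.closure_subset ((closure_mono hTS) (hdense hs))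
    have := hsS.2
    simp only [Set.mem_preimage, Set.mem_Iic, hg_def] at this
    linarith
  refine ⟨⟨hD, ?_⟩, hcont⟩
  intro x hx y hy a b ha hb hab
  have h := hP a ⟨ha, by linarith⟩ x hx y hy
  have hb' : (1:ℝ) - a = b := by linarith
  rw [hb'] at h
  simpa [smul_eq_mul] using h
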